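/- Let K be a compact Hausdorff space and m, p, N ∈ ℕ. Let g₁, …, g_N : K → [0,1] be continuous with Σ_j g_j = 1 (a partition of unity). Define h₀ ≡ 0 and h_j = p·Σ_{i=1}^j g_i for 1 ≤ j ≤ N, and for λ ∈ K set p_j(λ) := p_{h_j(λ)} − p_{h_{j−1}(λ)} ∈ M_p where p_t = diag(1,…,1, t−⌊t⌋, 0,…,0). Then for each j, the map λ ↦ p_j(λ) is norm-continuous from K to M_p, each p_j(λ) is a positive contraction, Σ_j p_j(λ) = 1_p, the normalized trace satisfies tr(p_j(λ)) = g_j(λ), and tr(p_i(λ)p_j(λ)) ≤ 1/(4p) for i ≠ j. -/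
import Mathlib


open Finset

/-- Ozawa's diagonal positive contraction `p_t = diag(1,…,1, t−⌊t⌋, 0,…,0)`
with the fractional entry in position `⌊t⌋ + 1`. -/
noncomputable def ptDiag (p : ℕ) (t : ℝ) : Matrix (Fin p) (Fin p) ℝ :=
  Matrix.diagonal fun i =>
    if (i : ℕ) < ⌊t⌋₊ then 1 else if (i : ℕ) = ⌊t⌋₊ then t - ⌊t⌋₊ else 0

/-- The partial sums `h_j = p · Σ_{i ≤ j} g_i` of a partition of unity. -/
noncomputable def partialSum {K : Type*} [TopologicalSpace K] {N : ℕ}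
    (p : ℕ) (g : Fin N → C(K, ℝ)) (j : ℕ) (lam : K) : ℝ :=
  p * ∑ i ∈ Finset.univ.filter (fun i : Fin N => (i : ℕ) < j), g i lam

/-! ### Auxiliary material -/

/-- Closed form for the diagonal entries of `ptDiag`. -/
noncomputable def entf (i : ℕ) (t : ℝ) : ℝ := min 1 (max 0 (t - i))

lemma entf_nonneg (i : ℕ) (t : ℝ) : 0 ≤ entf i t :=
  le_min zero_le_one (le_max_left _ _)

lemma entf_le_one (i : ℕ) (t : ℝ) : entf i t ≤ 1 := min_le_left _ _

lemma entf_mono (i : ℕ) {s t : ℝ} (h : s ≤ t) : entf i s ≤ entf i t :=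
  min_le_min le_rfl (max_le_max le_rfl (by linarith))

lemma ptDiag_eq (p : ℕ) (t : ℝ) (ht : 0 ≤ t) :
    ptDiag p t = Matrix.diagonal (fun i : Fin p => entf (i : ℕ) t) := by
  have hfl : (⌊t⌋₊ : ℝ) ≤ t := Nat.floor_le ht
  have hfl2 : t < ⌊t⌋₊ + 1 := Nat.lt_floor_add_one t
  have hfun : (fun i : Fin p =>
      if (i : ℕ) < ⌊t⌋₊ then (1 : ℝ) else if (i : ℕ) = ⌊t⌋₊ then t - ⌊t⌋₊ else 0)
      = fun i : Fin p => entf (i : ℕ) t := by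
    funext i
    rcases lt_trichotomy (i : ℕ) ⌊t⌋₊ with h | h | h
    · rw [if_pos h]
      have h1 : ((i : ℕ) : ℝ) + 1 ≤ (⌊t⌋₊ : ℝ) := by exact_mod_cast h
      unfold entf
      rw [max_eq_right (by linarith), min_eq_left (by linarith)]
    · rw [if_neg (by omega), if_pos h]
      have h1 : ((i : ℕ) : ℝ) = (⌊t⌋₊ : ℝ) := by exact_mod_cast h
      unfold entf
      rw [h1, max_eq_right (by linarith), min_eq_right (by linarith)]
    · rw [if_neg (by omega), if_neg (by omega)]
      have h1 : (⌊t⌋₊ : ℝ) + 1 ≤ ((i : ℕ) : ℝ) := by exact_mod_cast h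
      unfold entf
      rw [max_eq_left (by linarith), min_eq_right zero_le_one]
  unfold ptDiag
  rw [hfun]

lemma sum_entf (p : ℕ) (t : ℝ) (h0 : 0 ≤ t) (hp : t ≤ p) :
    ∑ i : Fin p, entf (i : ℕ) t = t := by
  induction p with
  | zero =>
    have ht : t = 0 := le_antisymm (by exact_mod_cast hp) h0
    simp [ht]
  | succ p ih =>
    rw [Fin.sum_univ_castSucc]
    simp only [Fin.coe_castSucc, Fin.val_last]
    by_cases h : t ≤ p
    · have hlast : entf p t = 0 := by
        unfold entf
        rw [max_eq_left (by linarith), min_eq_right zero_le_one]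
      rw [ih h, hlast, add_zero]
    · push_neg at h
      have hall : ∀ i : Fin p, entf (i : ℕ) t = 1 := by
        intro i
        have hi : ((i : ℕ) : ℝ) + 1 ≤ (p : ℝ) := by exact_mod_cast i.isLt
        unfold entf
        rw [max_eq_right (by linarith), min_eq_left (by linarith)]
      have hlast : entf p t = t - p := by
        unfold entf
        have : (p : ℝ) ≤ t := le_of_lt h
        have h2 : t - p ≤ 1 := by push_cast at hp ⊢; linarith
        rw [max_eq_right (by linarith), min_eq_right h2]
      rw [Finset.sum_congr rfl (fun i _ => hall i), hlast]
      simp [Finset.sum_const]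

lemma entf_prod_key (p : ℕ) (a b c d : ℝ) (h0 : 0 ≤ a) (hab : a ≤ b)
    (hbc : b ≤ c) (hcd : c ≤ d) :
    ∑ k : Fin p, (entf (k : ℕ) b - entf (k : ℕ) a) * (entf (k : ℕ) d - entf (k : ℕ) c)
      ≤ 1 / 4 := by
  set F : Fin p → ℝ := fun k =>
    (entf (k : ℕ) b - entf (k : ℕ) a) * (entf (k : ℕ) d - entf (k : ℕ) c) with hF
  have hterm : ∀ k : Fin p, F k ≤ 1 / 4 := by
    intro k
    have e1 := entf_nonneg (k : ℕ) a
    have e2 := entf_le_one (k : ℕ) d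
    have e3 := entf_mono (k : ℕ) hbc
    have e4 := entf_mono (k : ℕ) hab
    have e5 := entf_mono (k : ℕ) hcd
    have e6 := entf_nonneg (k : ℕ) b
    have hFk : F k ≤ entf (k : ℕ) b * (1 - entf (k : ℕ) b) := by
      apply mul_le_mul (by linarith) (by linarith) (by linarith) e6
    nlinarith [sq_nonneg (entf (k : ℕ) b - 1 / 2)]
  have hsupp : ∀ m : Fin p, F m ≠ 0 → ((m : ℕ) : ℝ) < b ∧ c - 1 < ((m : ℕ) : ℝ) := by
    intro m hm
    have e4 := entf_mono (m : ℕ) hab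
    have e5 := entf_mono (m : ℕ) hcd
    rcases mul_ne_zero_iff.mp hm with ⟨h1, h2⟩
    have hf1 : 0 < entf (m : ℕ) b - entf (m : ℕ) a := lt_of_le_of_ne (by linarith) (Ne.symm h1)
    have hf2 : 0 < entf (m : ℕ) d - entf (m : ℕ) c := lt_of_le_of_ne (by linarith) (Ne.symm h2)
    constructor
    · -- entf m b > 0 forces m < b
      have hb : 0 < entf (m : ℕ) b := lt_of_lt_of_le hf1 (by have := entf_nonneg (m : ℕ) a; linarith)
      by_contra hcon
      push_neg at hcon
      have : entf (m : ℕ) b = 0 := by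
        unfold entf
        rw [max_eq_left (by linarith), min_eq_right zero_le_one]
      linarith [this ▸ hb]
    · -- entf m c < 1 forces c - 1 < m
      have hc : entf (m : ℕ) c < 1 := by have := entf_le_one (m : ℕ) d; linarith
      by_contra hcon
      push_neg at hcon
      have : entf (m : ℕ) c = 1 := by
        unfold entf
        rw [max_eq_right (by linarith), min_eq_left (by linarith)]
      linarith [this ▸ hc]
  by_cases hz : ∀ k : Fin p, F k = 0
  · rw [Finset.sum_eq_zero (fun k _ => hz k)]; norm_num
  · push_neg at hz
    obtain ⟨k0, hk0⟩ := hz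
    have huniq : ∀ k : Fin p, k ≠ k0 → F k = 0 := by
      intro k hk
      by_contra hkne
      obtain ⟨hb1, hc1⟩ := hsupp k hkne
      obtain ⟨hb2, hc2⟩ := hsupp k0 hk0
      have l1 : ((k : ℕ) : ℝ) < ((k0 : ℕ) : ℝ) + 1 := by linarith
      have l2 : ((k0 : ℕ) : ℝ) < ((k : ℕ) : ℝ) + 1 := by linarith
      have n1 : (k : ℕ) < (k0 : ℕ) + 1 := by exact_mod_cast l1
      have n2 : (k0 : ℕ) < (k : ℕ) + 1 := by exact_mod_cast l2
      exact hk (Fin.ext (by omega))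
    rw [Finset.sum_eq_single k0 (fun k _ hk => huniq k hk)
      (fun h => absurd (Finset.mem_univ k0) h)]
    exact hterm k0

section PartialSumLemmas

variable {K : Type*} [TopologicalSpace K] {N : ℕ} (p : ℕ) (g : Fin N → C(K, ℝ))

lemma partialSum_nonneg (hg0 : ∀ j lam, 0 ≤ g j lam) (j : ℕ) (lam : K) :
    0 ≤ partialSum p g j lam :=
  mul_nonneg (Nat.cast_nonneg p) (Finset.sum_nonneg fun i _ => hg0 i lam)

lemma partialSum_mono (hg0 : ∀ j lam, 0 ≤ g j lam) {j j' : ℕ} (h : j ≤ j') (lam : K) :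
    partialSum p g j lam ≤ partialSum p g j' lam := by
  unfold partialSum
  apply mul_le_mul_of_nonneg_left _ (Nat.cast_nonneg p)
  apply Finset.sum_le_sum_of_subset_of_nonneg
  · intro i hi
    simp only [Finset.mem_filter, Finset.mem_univ, true_and] at hi ⊢
    omega
  · intro i _ _
    exact hg0 i lam

lemma partialSum_le_p (hg0 : ∀ j lam, 0 ≤ g j lam) (hgsum : ∀ lam, ∑ j, g j lam = 1)
    (j : ℕ) (lam : K) : partialSum p g j lam ≤ p := by
  unfold partialSum
  have h1 : ∑ i ∈ Finset.univ.filter (fun i : Fin N => (i : ℕ) < j), g i lam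
      ≤ ∑ i : Fin N, g i lam :=
    Finset.sum_le_sum_of_subset_of_nonneg (Finset.filter_subset _ _)
      (fun i _ _ => hg0 i lam)
  calc (p : ℝ) * ∑ i ∈ Finset.univ.filter (fun i : Fin N => (i : ℕ) < j), g i lam
      ≤ p * 1 := mul_le_mul_of_nonneg_left (by rw [← hgsum lam]; exact h1) (Nat.cast_nonneg p)
    _ = p := mul_one _

lemma partialSum_zero (lam : K) : partialSum p g 0 lam = 0 := by
  unfold partialSum; simp

lemma partialSum_top (hgsum : ∀ lam, ∑ j, g j lam = 1) (lam : K) :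
    partialSum p g N lam = p := by
  unfold partialSum
  rw [Finset.filter_true_of_mem (fun i _ => i.isLt), hgsum lam, mul_one]

lemma partialSum_succ (j : Fin N) (lam : K) :
    partialSum p g ((j : ℕ) + 1) lam = partialSum p g (j : ℕ) lam + p * g j lam := by
  unfold partialSum
  have hins : Finset.univ.filter (fun i : Fin N => (i : ℕ) < (j : ℕ) + 1)
      = insert j (Finset.univ.filter (fun i : Fin N => (i : ℕ) < (j : ℕ))) := by
    ext i
    simp only [Finset.mem_filter, Finset.mem_univ, true_and, Finset.mem_insert,
      Nat.lt_succ_iff_lt_or_eq, Fin.ext_iff]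
    tauto
  rw [hins, Finset.sum_insert (by simp)]
  ring

lemma partialSum_continuous (j : ℕ) : Continuous fun lam : K => partialSum p g j lam := by
  unfold partialSum
  exact continuous_const.mul (continuous_finset_sum _ fun i _ => (g i).continuous)

end PartialSumLemmas

lemma ptDiag_natCast (p : ℕ) : ptDiag p (p : ℝ) = 1 := by
  have hfun : (fun i : Fin p =>
      if (i : ℕ) < ⌊(p : ℝ)⌋₊ then (1 : ℝ) else if (i : ℕ) = ⌊(p : ℝ)⌋₊ then (p : ℝ) - ⌊(p : ℝ)⌋₊ else 0)
      = fun _ : Fin p => (1 : ℝ) := by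
    funext i
    rw [Nat.floor_natCast, if_pos i.isLt]
  unfold ptDiag
  rw [hfun]
  exact Matrix.diagonal_one

lemma ptDiag_zero (p : ℕ) : ptDiag p 0 = 0 := by
  have hfun : (fun i : Fin p =>
      if (i : ℕ) < ⌊(0 : ℝ)⌋₊ then (1 : ℝ) else if (i : ℕ) = ⌊(0 : ℝ)⌋₊ then (0 : ℝ) - ⌊(0 : ℝ)⌋₊ else 0)
      = fun _ : Fin p => (0 : ℝ) := by
    funext i
    simp
  unfold ptDiag
  rw [hfun]
  exact Matrix.diagonal_zero

/-- Ozawa's matrix-valued simulation of a partition of unity: the interval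
cut-downs `p_j(λ) = p_{h_j(λ)} − p_{h_{j−1}(λ)}` are norm-continuous positive
contractions summing to `1`, with normalized traces `g_j(λ)` and pairwise
products of normalized trace at most `1/(4p)`. -/
theorem ozawa_partition_simulation
    {K : Type*} [TopologicalSpace K] [CompactSpace K] [T2Space K]
    (N p : ℕ) (hp : 0 < p)
    (g : Fin N → C(K, ℝ))
    (hg0 : ∀ j lam, 0 ≤ g j lam) (hg1 : ∀ j lam, g j lam ≤ 1)
    (hgsum : ∀ lam, ∑ j, g j lam = 1) :
    (∀ j : Fin N, Continuous fun lam =>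
      ptDiag p (partialSum p g ((j : ℕ) + 1) lam) -
        ptDiag p (partialSum p g (j : ℕ) lam)) ∧
    (∀ (j : Fin N) (lam : K),
      (ptDiag p (partialSum p g ((j : ℕ) + 1) lam) -
        ptDiag p (partialSum p g (j : ℕ) lam)).PosSemidef ∧
      (1 - (ptDiag p (partialSum p g ((j : ℕ) + 1) lam) -
        ptDiag p (partialSum p g (j : ℕ) lam))).PosSemidef) ∧
    (∀ lam : K,
      ∑ j : Fin N, (ptDiag p (partialSum p g ((j : ℕ) + 1) lam) -
        ptDiag p (partialSum p g (j : ℕ) lam)) = 1) ∧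
    (∀ (j : Fin N) (lam : K),
      (ptDiag p (partialSum p g ((j : ℕ) + 1) lam) -
        ptDiag p (partialSum p g (j : ℕ) lam)).trace / p = g j lam) ∧
    (∀ (i j : Fin N), i ≠ j → ∀ lam : K,
      ((ptDiag p (partialSum p g ((i : ℕ) + 1) lam) -
          ptDiag p (partialSum p g (i : ℕ) lam)) *
        (ptDiag p (partialSum p g ((j : ℕ) + 1) lam) -
          ptDiag p (partialSum p g (j : ℕ) lam))).trace / p
        ≤ 1 / (4 * p)) := by
  have hpR : (0 : ℝ) < p := by exact_mod_cast hp
  have hnn : ∀ (j : ℕ) (lam : K), 0 ≤ partialSum p g j lam :=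
    fun j lam => partialSum_nonneg p g hg0 j lam
  -- the key diagonal description
  have hdiag : ∀ (j : ℕ) (lam : K),
      ptDiag p (partialSum p g j lam)
        = Matrix.diagonal (fun i : Fin p => entf (i : ℕ) (partialSum p g j lam)) :=
    fun j lam => ptDiag_eq p _ (hnn j lam)
  have hdiff : ∀ (j : Fin N) (lam : K),
      ptDiag p (partialSum p g ((j : ℕ) + 1) lam) -
        ptDiag p (partialSum p g (j : ℕ) lam)
      = Matrix.diagonal (fun i : Fin p =>
          entf (i : ℕ) (partialSum p g ((j : ℕ) + 1) lam)
            - entf (i : ℕ) (partialSum p g (j : ℕ) lam)) := by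
    intro j lam
    rw [hdiag, hdiag, Matrix.diagonal_sub]
  refine ⟨?_, ?_, ?_, ?_, ?_⟩
  · -- continuity
    intro j
    have hc : ∀ (m : ℕ), Continuous fun lam : K =>
        Matrix.diagonal (fun i : Fin p => entf (i : ℕ) (partialSum p g m lam)) := by
      intro m
      apply Continuous.matrix_diagonal
      apply continuous_pi
      intro i
      exact continuous_const.min
        (continuous_const.max ((partialSum_continuous p g m).sub continuous_const))
    have heq : (fun lam : K =>
        ptDiag p (partialSum p g ((j : ℕ) + 1) lam) -
          ptDiag p (partialSum p g (j : ℕ) lam))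
        = fun lam =>
          Matrix.diagonal (fun i : Fin p => entf (i : ℕ) (partialSum p g ((j : ℕ) + 1) lam))
            - Matrix.diagonal (fun i : Fin p => entf (i : ℕ) (partialSum p g (j : ℕ) lam)) := by
      funext lam
      rw [hdiag, hdiag]
    rw [heq]
    exact (hc _).sub (hc _)
  · -- positivity and contraction
    intro j lam
    have hmono : partialSum p g (j : ℕ) lam ≤ partialSum p g ((j : ℕ) + 1) lam :=
      partialSum_mono p g hg0 (Nat.le_succ _) lam
    constructor
    · rw [hdiff]
      rw [Matrix.posSemidef_diagonal_iff]
      intro i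
      have := entf_mono (i : ℕ) hmono
      linarith
    · rw [hdiff, ← Matrix.diagonal_one, Matrix.diagonal_sub,
        Matrix.posSemidef_diagonal_iff]
      intro i
      have h1 := entf_le_one (i : ℕ) (partialSum p g ((j : ℕ) + 1) lam)
      have h2 := entf_nonneg (i : ℕ) (partialSum p g (j : ℕ) lam)
      linarith
  · -- sum to one
    intro lam
    rw [Fin.sum_univ_eq_sum_range (fun m : ℕ =>
      ptDiag p (partialSum p g (m + 1) lam) - ptDiag p (partialSum p g m lam)) N]
    rw [Finset.sum_range_sub (fun m : ℕ => ptDiag p (partialSum p g m lam)) N]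
    rw [partialSum_top p g hgsum lam, partialSum_zero p g lam, ptDiag_natCast, ptDiag_zero,
      sub_zero]
  · -- traces
    intro j lam
    rw [hdiff, Matrix.trace_diagonal, Finset.sum_sub_distrib,
      sum_entf p _ (hnn _ lam) (partialSum_le_p p g hg0 hgsum _ lam),
      sum_entf p _ (hnn _ lam) (partialSum_le_p p g hg0 hgsum _ lam),
      partialSum_succ p g j lam, add_sub_cancel_left, mul_div_cancel_left₀ _ (ne_of_gt hpR)]
  · -- pairwise products
    have key2 : ∀ i j : Fin N, (i : ℕ) < (j : ℕ) →
        ∀ lam : K,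
        ((ptDiag p (partialSum p g ((i : ℕ) + 1) lam) -
            ptDiag p (partialSum p g (i : ℕ) lam)) *
          (ptDiag p (partialSum p g ((j : ℕ) + 1) lam) -
            ptDiag p (partialSum p g (j : ℕ) lam))).trace ≤ 1 / 4 := by
      intro i j hij lam
      rw [hdiff, hdiff, Matrix.diagonal_mul_diagonal, Matrix.trace_diagonal]
      exact entf_prod_key p _ _ _ _ (hnn _ lam)
        (partialSum_mono p g hg0 (Nat.le_succ _) lam)
        (partialSum_mono p g hg0 hij lam)
        (partialSum_mono p g hg0 (Nat.le_succ _) lam)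
    intro i j hij lam
    have hquarter : ((ptDiag p (partialSum p g ((i : ℕ) + 1) lam) -
          ptDiag p (partialSum p g (i : ℕ) lam)) *
        (ptDiag p (partialSum p g ((j : ℕ) + 1) lam) -
          ptDiag p (partialSum p g (j : ℕ) lam))).trace ≤ 1 / 4 := by
      rcases Nat.lt_or_ge (i : ℕ) (j : ℕ) with h | h
      · exact key2 i j h lam
      · have h' : (j : ℕ) < (i : ℕ) := by
          rcases Nat.lt_or_ge (j : ℕ) (i : ℕ) with h2 | h2
          · exact h2
          · exact absurd (Fin.ext (le_antisymm h h2)) (Ne.symm hij)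
        rw [Matrix.trace_mul_comm]
        exact key2 j i h' lam
    rw [show (1 : ℝ) / (4 * p) = (1 / 4) / (p : ℝ) by rw [div_div]]
    exact div_le_div_of_nonneg_right hquarter hpR.le
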